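/- Assume there exists a constant K₁ ∈ (0,1] such that ℙ(S_{τ₁} ≥ m) ≥ K₁ · m^{1−α} for every integer m ≥ 1, where τ₁ = inf{k ≥ 1 : S_k ≥ 0}. Then for every integer m ≥ 1 and every real y ≥ 1, ℙ(Δ(ρ_m) > y · m^{α−1}) ≤ exp(−K₁·y/2), where ρ_m = inf{k ≥ 0 : S_k ≥ m} (which is almost surely finite) and Δ(k) = #{ℓ ∈ {1,…,k} : S_ℓ = max_{0≤n≤ℓ} S_n} is the number of weak records of the walk up to time k. -/

import Mathlib

open MeasureTheory ProbabilityTheory Filter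
open scoped ENNReal

set_option linter.unusedSectionVars false
set_option linter.unusedVariables false
set_option maxHeartbeats 1000000

namespace Stmt19Aux

open scoped Classical

variable {Ω : Type} [MeasureSpace Ω]

/-! ### Cylinder sets and deterministic prefixes -/

/-- Cylinder event: the first `a.length` steps equal the list `a`. -/
def Cyl (ξ : ℕ → Ω → ℤ) (a : List ℤ) : Set Ω :=
  {ω | ∀ i < a.length, ξ i ω = a.getD i 0}

/-- partial sums of a list -/
def psum (a : List ℤ) (j : ℕ) : ℤ := ∑ i ∈ Finset.range j, a.getD i 0

/-- block of increments of length `s` starting at index `t` -/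
def pre (ξ : ℕ → Ω → ℤ) (ω : Ω) (t s : ℕ) : List ℤ :=
  (List.range s).map fun i => ξ (t + i) ω

/-- the good future event: first return to the running maximum exceeds it by at least `c` -/
def Good (S : ℕ → Ω → ℤ) (t : ℕ) (c : ℤ) : Set Ω :=
  {ω | ∃ k, 1 ≤ k ∧ (∀ j, 1 ≤ j → j < k → S (t + j) ω < S t ω) ∧ S t ω + c ≤ S (t + k) ω}

/-- the bad future event: first return to the running maximum exceeds it by less than `c` -/
def Bad (S : ℕ → Ω → ℤ) (t : ℕ) (c : ℤ) : Set Ω :=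
  {ω | ∃ k, 1 ≤ k ∧ (∀ j, 1 ≤ j → j < k → S (t + j) ω < S t ω) ∧
    S t ω ≤ S (t + k) ω ∧ S (t + k) ω < S t ω + c}

/-- deterministic ladder words: negative until the end, final sum at least `c` -/
def E (c : ℤ) : Set (List ℤ) :=
  {b | 0 < b.length ∧ (∀ j, 1 ≤ j → j < b.length → psum b j < 0) ∧ c ≤ psum b b.length}

/-- `ℓ` is a weak record time -/
def RecAt (S : ℕ → Ω → ℤ) (ω : Ω) (ℓ : ℕ) : Prop := ∀ j ≤ ℓ, S j ω ≤ S ℓ ω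

noncomputable def Fcnt (S : ℕ → Ω → ℤ) (ω : Ω) (t : ℕ) : Finset ℕ :=
  (Finset.Icc 1 t).filter (fun ℓ => RecAt S ω ℓ)

/-- list version of record predicate -/
def LRecAt (a : List ℤ) (ℓ : ℕ) : Prop := ∀ j ≤ ℓ, psum a j ≤ psum a ℓ

noncomputable def Lcnt (a : List ℤ) : ℕ :=
  ((Finset.Icc 1 a.length).filter (fun ℓ => LRecAt a ℓ)).card

/-- deterministic prefixes with exactly `n` records, last time a record, height `< m` -/
def D (m n : ℕ) : Set (List ℤ) :=
  {a | 0 < a.length ∧ LRecAt a a.length ∧ Lcnt a = n ∧ psum a a.length < (m : ℤ)}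

/-- at least `n` weak records, all of height `< m` -/
def Arec (S : ℕ → Ω → ℤ) (Δ : ℕ → Ω → ℕ) (m n : ℕ) : Set Ω :=
  {ω | ∃ t, 1 ≤ t ∧ RecAt S ω t ∧ Δ t ω = n ∧ S t ω < (m : ℤ)}

lemma cyl_nil (ξ : ℕ → Ω → ℤ) : Cyl ξ ([] : List ℤ) = Set.univ := by
  ext ω; simp [Cyl]

lemma cyl_eq_iInter (ξ : ℕ → Ω → ℤ) (a : List ℤ) :
    Cyl ξ a = ⋂ i ∈ Finset.range a.length, ξ i ⁻¹' {a.getD i 0} := by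
  ext ω; simp [Cyl]

lemma measurableSet_cyl {ξ : ℕ → Ω → ℤ} (hmeas : ∀ i, Measurable (ξ i)) (a : List ℤ) :
    MeasurableSet (Cyl ξ a) := by
  rw [cyl_eq_iInter]
  exact MeasurableSet.biInter (Finset.range a.length).countable_toSet
    fun i _ => (hmeas i) (measurableSet_singleton _)

lemma meas_cyl {ξ : ℕ → Ω → ℤ} (hmeas : ∀ i, Measurable (ξ i))
    (hindep : iIndepFun ξ (ℙ : Measure Ω))
    {ν : Measure ℤ} (hdist : ∀ i, Measure.map (ξ i) ℙ = ν) (a : List ℤ) :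
    ℙ (Cyl ξ a) = ∏ i ∈ Finset.range a.length, ν {a.getD i 0} := by
  rw [cyl_eq_iInter]
  rw [hindep.meas_biInter (fun i _ => ⟨{a.getD i 0}, measurableSet_singleton _, rfl⟩)]
  refine Finset.prod_congr rfl fun i _ => ?_
  rw [← hdist i, Measure.map_apply (hmeas i) (measurableSet_singleton _)]

lemma meas_cyl_append {ξ : ℕ → Ω → ℤ} (hmeas : ∀ i, Measurable (ξ i))
    (hindep : iIndepFun ξ (ℙ : Measure Ω))
    {ν : Measure ℤ} (hdist : ∀ i, Measure.map (ξ i) ℙ = ν) (a b : List ℤ) :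
    ℙ (Cyl ξ (a ++ b)) = ℙ (Cyl ξ a) * ℙ (Cyl ξ b) := by
  rw [meas_cyl hmeas hindep hdist, meas_cyl hmeas hindep hdist,
    meas_cyl hmeas hindep hdist, List.length_append, Finset.prod_range_add]
  congr 1
  · exact Finset.prod_congr rfl fun i hi => by
      rw [List.getD_append _ _ _ _ (Finset.mem_range.1 hi)]
  · exact Finset.prod_congr rfl fun i _ => by
      rw [List.getD_append_right _ _ _ _ (Nat.le_add_right _ _), Nat.add_sub_cancel_left]

@[simp] lemma length_pre (ξ : ℕ → Ω → ℤ) (ω : Ω) (t s : ℕ) :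
    (pre ξ ω t s).length = s := by simp [pre]

lemma getD_pre (ξ : ℕ → Ω → ℤ) (ω : Ω) (t s : ℕ) {i : ℕ} (hi : i < s) :
    (pre ξ ω t s).getD i 0 = ξ (t + i) ω := by
  rw [List.getD_eq_getElem _ _ (by simpa using hi)]
  simp [pre]

lemma mem_cyl_pre (ξ : ℕ → Ω → ℤ) (ω : Ω) (s : ℕ) : ω ∈ Cyl ξ (pre ξ ω 0 s) := by
  intro i hi
  rw [getD_pre _ _ _ _ (by simpa using hi)]
  simp

lemma mem_cyl_append_pre {ξ : ℕ → Ω → ℤ} {ω : Ω} {a : List ℤ} (hω : ω ∈ Cyl ξ a) (s : ℕ) :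
    ω ∈ Cyl ξ (a ++ pre ξ ω a.length s) := by
  intro i hi
  rcases lt_or_ge i a.length with h | h
  · rw [List.getD_append _ _ _ _ h]; exact hω i h
  · rw [List.getD_append_right _ _ _ _ h,
      getD_pre _ _ _ _ (by simp at hi ⊢; omega)]
    congr 1; omega

lemma cyl_append_subset (ξ : ℕ → Ω → ℤ) (a b : List ℤ) :
    Cyl ξ (a ++ b) ⊆ Cyl ξ a := by
  intro ω hω i hi
  have := hω i (by simp; omega)
  rwa [List.getD_append _ _ _ _ hi] at this

lemma S_eq_of_cyl {ξ : ℕ → Ω → ℤ} {S : ℕ → Ω → ℤ}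
    (hS : ∀ n ω, S n ω = ∑ i ∈ Finset.range n, ξ i ω)
    {ω : Ω} {a : List ℤ} (hω : ω ∈ Cyl ξ a) {j : ℕ} (hj : j ≤ a.length) :
    S j ω = psum a j := by
  rw [hS]
  exact Finset.sum_congr rfl fun i hi => hω i (lt_of_lt_of_le (Finset.mem_range.1 hi) hj)

lemma S_shift_of_cyl_append {ξ : ℕ → Ω → ℤ} {S : ℕ → Ω → ℤ}
    (hS : ∀ n ω, S n ω = ∑ i ∈ Finset.range n, ξ i ω)
    {ω : Ω} {a b : List ℤ} (hω : ω ∈ Cyl ξ (a ++ b)) {j : ℕ} (hj : j ≤ b.length) :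
    S (a.length + j) ω = S a.length ω + psum b j := by
  rw [hS, hS, Finset.sum_range_add]
  congr 1
  refine Finset.sum_congr rfl fun i hi => ?_
  have hi' : i < b.length := lt_of_lt_of_le (Finset.mem_range.1 hi) hj
  have := hω (a.length + i) (by simp; omega)
  rw [this, List.getD_append_right _ _ _ _ (Nat.le_add_right _ _), Nat.add_sub_cancel_left]

lemma measurable_S {ξ : ℕ → Ω → ℤ} (hmeas : ∀ i, Measurable (ξ i))
    {S : ℕ → Ω → ℤ} (hS : ∀ n ω, S n ω = ∑ i ∈ Finset.range n, ξ i ω) (n : ℕ) :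
    Measurable (fun ω => S n ω) := by
  have : (fun ω => S n ω) = fun ω => ∑ i ∈ Finset.range n, ξ i ω := funext fun ω => hS n ω
  rw [this]
  exact Finset.measurable_sum _ fun i _ => hmeas i

lemma measurableSet_pair {f g : Ω → ℤ} (hf : Measurable f) (hg : Measurable g)
    (P : ℤ → ℤ → Prop) : MeasurableSet {ω | P (f ω) (g ω)} := by
  have : {ω | P (f ω) (g ω)} = (fun ω => (f ω, g ω)) ⁻¹' {p : ℤ × ℤ | P p.1 p.2} := rfl
  rw [this]
  exact (hf.prodMk hg) ((Set.to_countable _).measurableSet)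

lemma measurableSet_good {ξ : ℕ → Ω → ℤ} (hmeas : ∀ i, Measurable (ξ i))
    {S : ℕ → Ω → ℤ} (hS : ∀ n ω, S n ω = ∑ i ∈ Finset.range n, ξ i ω)
    (t : ℕ) (c : ℤ) : MeasurableSet (Good S t c) := by
  have : Good S t c = ⋃ k, ⋃ _ : 1 ≤ k,
      ((⋂ j ∈ Finset.Ico 1 k, {ω | S (t + j) ω < S t ω}) ∩
        {ω | S t ω + c ≤ S (t + k) ω}) := by
    ext ω
    simp only [Good, Set.mem_setOf_eq, Set.mem_iUnion, Set.mem_inter_iff, Set.mem_iInter,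
      Finset.mem_Ico]
    constructor
    · rintro ⟨k, hk, h1, h2⟩; exact ⟨k, hk, fun j hj => h1 j hj.1 hj.2, h2⟩
    · rintro ⟨k, hk, h1, h2⟩; exact ⟨k, hk, fun j hj1 hj2 => h1 j ⟨hj1, hj2⟩, h2⟩
  rw [this]
  refine MeasurableSet.iUnion fun k => MeasurableSet.iUnion fun _ => MeasurableSet.inter ?_ ?_
  · exact MeasurableSet.biInter (Finset.Ico 1 k).countable_toSet fun j _ =>
      measurableSet_pair (measurable_S hmeas hS _) (measurable_S hmeas hS _) (· < ·)
  · exact measurableSet_pair (measurable_S hmeas hS _) (measurable_S hmeas hS _)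
      (fun x y => y + c ≤ x)

lemma S_zero {ξ : ℕ → Ω → ℤ} {S : ℕ → Ω → ℤ}
    (hS : ∀ n ω, S n ω = ∑ i ∈ Finset.range n, ξ i ω) (ω : Ω) : S 0 ω = 0 := by
  simp [hS]

lemma good_decomp {ξ : ℕ → Ω → ℤ} {S : ℕ → Ω → ℤ}
    (hS : ∀ n ω, S n ω = ∑ i ∈ Finset.range n, ξ i ω) (a : List ℤ) (c : ℤ) :
    Cyl ξ a ∩ Good S a.length c = ⋃ b ∈ E c, Cyl ξ (a ++ b) := by
  ext ω
  simp only [Set.mem_inter_iff, Set.mem_iUnion, exists_prop]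
  constructor
  · rintro ⟨hcyl, k, hk, hneg, hc⟩
    refine ⟨pre ξ ω a.length k, ?_, mem_cyl_append_pre hcyl k⟩
    have hmem := mem_cyl_append_pre hcyl k
    have hlen : (pre ξ ω a.length k).length = k := by simp [pre]
    have hps : ∀ j ≤ k, psum (pre ξ ω a.length k) j = S (a.length + j) ω - S a.length ω := by
      intro j hj
      have := S_shift_of_cyl_append hS hmem (by omega : j ≤ (pre ξ ω a.length k).length)
      omega
    refine ⟨by omega, fun j hj1 hj2 => ?_, ?_⟩
    · rw [hlen] at hj2
      have := hps j (by omega)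
      have := hneg j hj1 hj2
      omega
    · rw [hlen, hps k le_rfl]
      omega
  · rintro ⟨b, ⟨hb0, hbneg, hbc⟩, hcyl⟩
    have hps : ∀ j ≤ b.length, S (a.length + j) ω = S a.length ω + psum b j :=
      fun j hj => S_shift_of_cyl_append hS hcyl hj
    refine ⟨cyl_append_subset ξ a b hcyl, b.length, hb0, fun j hj1 hj2 => ?_, ?_⟩
    · have := hps j (by omega)
      have := hbneg j hj1 hj2
      omega
    · have := hps b.length le_rfl
      omega

lemma E_pairwiseDisjoint {ξ : ℕ → Ω → ℤ} {S : ℕ → Ω → ℤ}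
    (hS : ∀ n ω, S n ω = ∑ i ∈ Finset.range n, ξ i ω) (a : List ℤ) {c : ℤ} (hc : 0 < c) :
    (E c).PairwiseDisjoint (fun b => Cyl ξ (a ++ b)) := by
  intro b hb b' hb' hne
  rw [Function.onFun, Set.disjoint_left]
  intro ω hωb hωb'
  apply hne
  have key : ∀ (u v : List ℤ), u ∈ E c → v ∈ E c → u.length ≤ v.length →
      ω ∈ Cyl ξ (a ++ u) → ω ∈ Cyl ξ (a ++ v) → u = v := by
    intro u v hu hv hlen hωu hωv
    have hpsu : ∀ j ≤ u.length, S (a.length + j) ω = S a.length ω + psum u j :=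
      fun j hj => S_shift_of_cyl_append hS hωu hj
    have hpsv : ∀ j ≤ v.length, S (a.length + j) ω = S a.length ω + psum v j :=
      fun j hj => S_shift_of_cyl_append hS hωv hj
    have hlleq : u.length = v.length := by
      by_contra hne'
      have hlt : u.length < v.length := lt_of_le_of_ne hlen hne'
      have h1 : psum v u.length < 0 := hv.2.1 u.length hu.1 hlt
      have h2 : psum u u.length = psum v u.length := by
        have := hpsu u.length le_rfl
        have := hpsv u.length (le_of_lt hlt)
        omega
      have h3 := hu.2.2
      omega
    apply List.ext_getElem hlleq
    intro i h1 h2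
    have e1 : ξ (a.length + i) ω = u.getD i 0 := by
      have := hωu (a.length + i) (by simp; omega)
      rwa [List.getD_append_right _ _ _ _ (Nat.le_add_right _ _),
        Nat.add_sub_cancel_left] at this
    have e2 : ξ (a.length + i) ω = v.getD i 0 := by
      have := hωv (a.length + i) (by simp; omega)
      rwa [List.getD_append_right _ _ _ _ (Nat.le_add_right _ _),
        Nat.add_sub_cancel_left] at this
    rw [← List.getD_eq_getElem u 0 h1, ← List.getD_eq_getElem v 0 h2, ← e1, ← e2]
  rcases le_total b.length b'.length with h | h
  · exact key b b' hb hb' h hωb hωb'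
  · exact (key b' b hb' hb h hωb' hωb).symm

lemma meas_good {ξ : ℕ → Ω → ℤ} (hmeas : ∀ i, Measurable (ξ i))
    (hindep : iIndepFun ξ (ℙ : Measure Ω))
    {ν : Measure ℤ} (hdist : ∀ i, Measure.map (ξ i) ℙ = ν)
    {S : ℕ → Ω → ℤ} (hS : ∀ n ω, S n ω = ∑ i ∈ Finset.range n, ξ i ω)
    (a : List ℤ) {c : ℤ} (hc : 0 < c) :
    ℙ (Cyl ξ a ∩ Good S a.length c) = ℙ (Cyl ξ a) * ∑' (b : E c), ℙ (Cyl ξ b) := by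
  rw [good_decomp hS a c,
    measure_biUnion (Set.to_countable _) (E_pairwiseDisjoint hS a hc)
      (fun b _ => measurableSet_cyl hmeas _)]
  rw [← ENNReal.tsum_mul_left]
  exact tsum_congr fun b => meas_cyl_append hmeas hindep hdist a b

lemma tau_eq_good {ξ : ℕ → Ω → ℤ} {S : ℕ → Ω → ℤ}
    (hS : ∀ n ω, S n ω = ∑ i ∈ Finset.range n, ξ i ω)
    {τ : Ω → ℕ} (hτ : ∀ ω, τ ω = sInf {k : ℕ | 1 ≤ k ∧ 0 ≤ S k ω})
    {c : ℤ} (hc : 1 ≤ c) :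
    {ω | c ≤ S (τ ω) ω} = Good S 0 c := by
  ext ω
  simp only [Set.mem_setOf_eq, Good]
  constructor
  · intro h
    by_cases hne : {k : ℕ | 1 ≤ k ∧ 0 ≤ S k ω}.Nonempty
    · set k := sInf {k : ℕ | 1 ≤ k ∧ 0 ≤ S k ω} with hk
      have hkmem := Nat.sInf_mem hne
      have hτω : τ ω = k := hτ ω
      refine ⟨k, hkmem.1, fun j hj1 hj2 => ?_, ?_⟩
      · have : j ∉ {k : ℕ | 1 ≤ k ∧ 0 ≤ S k ω} := Nat.notMem_of_lt_sInf hj2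
        simp only [Set.mem_setOf_eq, not_and, not_le] at this
        have := this hj1
        have h0 := S_zero hS ω
        simp only [Nat.zero_add]
        omega
      · rw [hτω] at h
        have h0 := S_zero hS ω
        simp only [Nat.zero_add]
        omega
    · exfalso
      have : τ ω = 0 := by
        rw [hτ ω, Set.not_nonempty_iff_eq_empty.1 hne]
        exact Nat.sInf_empty
      rw [this, S_zero hS ω] at h
      omega
  · rintro ⟨k, hk1, hneg, hgood⟩
    have h0 := S_zero hS ω
    simp only [Nat.zero_add] at hneg hgood
    have hkmem : k ∈ {k : ℕ | 1 ≤ k ∧ 0 ≤ S k ω} := ⟨hk1, by omega⟩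
    have hτω : τ ω = k := by
      rw [hτ ω]
      refine le_antisymm (Nat.sInf_le hkmem) ?_
      have hmem := Nat.sInf_mem ⟨k, hkmem⟩
      by_contra hlt
      push_neg at hlt
      have h1 : 1 ≤ sInf {k : ℕ | 1 ≤ k ∧ 0 ≤ S k ω} := hmem.1
      have := hneg _ h1 hlt
      have := hmem.2
      omega
    rw [hτω]
    omega

lemma meas_tau {ξ : ℕ → Ω → ℤ} (hmeas : ∀ i, Measurable (ξ i))
    (hindep : iIndepFun ξ (ℙ : Measure Ω))
    [IsProbabilityMeasure (ℙ : Measure Ω)]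
    {ν : Measure ℤ} (hdist : ∀ i, Measure.map (ξ i) ℙ = ν)
    {S : ℕ → Ω → ℤ} (hS : ∀ n ω, S n ω = ∑ i ∈ Finset.range n, ξ i ω)
    {τ : Ω → ℕ} (hτ : ∀ ω, τ ω = sInf {k : ℕ | 1 ≤ k ∧ 0 ≤ S k ω})
    {c : ℤ} (hc : 1 ≤ c) :
    ℙ {ω | c ≤ S (τ ω) ω} = ∑' (b : E c), ℙ (Cyl ξ b) := by
  have h0 : ℙ (Cyl ξ ([] : List ℤ) ∩ Good S 0 c) = ℙ {ω | c ≤ S (τ ω) ω} := by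
    rw [tau_eq_good hS hτ hc]
    congr 1
    have : Cyl ξ ([] : List ℤ) = Set.univ := by ext ω; simp [Cyl]
    rw [this, Set.univ_inter]
  have := meas_good hmeas hindep hdist hS ([] : List ℤ) (by omega : (0:ℤ) < c)
  simp only [List.length_nil] at this
  rw [← h0, this]
  have : Cyl ξ ([] : List ℤ) = Set.univ := by ext ω; simp [Cyl]
  rw [this, measure_univ, one_mul]

lemma bad_disjoint_good (S : ℕ → Ω → ℤ) (t : ℕ) {c : ℤ} (hc : 0 ≤ c) :
    Disjoint (Bad S t c) (Good S t c) := by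
  rw [Set.disjoint_left]
  rintro ω ⟨k, hk1, hkneg, hk2, hk3⟩ ⟨k', hk'1, hk'neg, hk'2⟩
  rcases lt_trichotomy k k' with h | h | h
  · have := hk'neg k hk1 h; omega
  · subst h; omega
  · have := hkneg k' hk'1 h; omega

lemma bad_bound {ξ : ℕ → Ω → ℤ} (hmeas : ∀ i, Measurable (ξ i))
    (hindep : iIndepFun ξ (ℙ : Measure Ω))
    [IsProbabilityMeasure (ℙ : Measure Ω)]
    {ν : Measure ℤ} (hdist : ∀ i, Measure.map (ξ i) ℙ = ν)
    {S : ℕ → Ω → ℤ} (hS : ∀ n ω, S n ω = ∑ i ∈ Finset.range n, ξ i ω)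
    {τ : Ω → ℕ} (hτ : ∀ ω, τ ω = sInf {k : ℕ | 1 ≤ k ∧ 0 ≤ S k ω})
    {α K₁ : ℝ} (hα₁ : 1 < α) (hK₁ : 0 < K₁) (hK₁' : K₁ ≤ 1)
    {m : ℕ} (hm : 1 ≤ m)
    (hladder : ∀ m' : ℕ, 1 ≤ m' →
      ENNReal.ofReal (K₁ * (m' : ℝ) ^ ((1 : ℝ) - α)) ≤ ℙ {ω | (m' : ℤ) ≤ S (τ ω) ω})
    (a : List ℤ) {c : ℤ} (hc1 : 1 ≤ c) (hcm : c ≤ (m : ℤ)) :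
    ℙ (Cyl ξ a ∩ Bad S a.length c) ≤
      ℙ (Cyl ξ a) * ENNReal.ofReal (1 - K₁ * (m : ℝ) ^ ((1 : ℝ) - α)) := by
  set p : ℝ := K₁ * (m : ℝ) ^ ((1 : ℝ) - α) with hp
  have hmR : (1 : ℝ) ≤ (m : ℝ) := by exact_mod_cast hm
  have hp0 : 0 < p := mul_pos hK₁ (Real.rpow_pos_of_pos (by linarith) _)
  have hp1 : p ≤ 1 := by
    have h1 : (m : ℝ) ^ ((1 : ℝ) - α) ≤ 1 :=
      Real.rpow_le_one_of_one_le_of_nonpos hmR (by linarith)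
    nlinarith
  -- ladder probability bound for level c
  have hlad : ENNReal.ofReal p ≤ ℙ {ω | c ≤ S (τ ω) ω} := by
    set c' : ℕ := c.toNat with hc'
    have hcc' : (c' : ℤ) = c := Int.toNat_of_nonneg (by omega)
    have hc'1 : 1 ≤ c' := by omega
    have hc'm : c' ≤ m := by omega
    have h1 := hladder c' hc'1
    have h2 : p ≤ K₁ * (c' : ℝ) ^ ((1 : ℝ) - α) := by
      have : (m : ℝ) ^ ((1 : ℝ) - α) ≤ (c' : ℝ) ^ ((1 : ℝ) - α) :=
        Real.rpow_le_rpow_of_nonpos (by exact_mod_cast hc'1) (by exact_mod_cast hc'm)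
          (by linarith)
      nlinarith
    calc ENNReal.ofReal p ≤ ENNReal.ofReal (K₁ * (c' : ℝ) ^ ((1 : ℝ) - α)) :=
          ENNReal.ofReal_le_ofReal h2
      _ ≤ ℙ {ω | (c' : ℤ) ≤ S (τ ω) ω} := h1
      _ = ℙ {ω | c ≤ S (τ ω) ω} := by rw [hcc']
  -- good part has probability at least ℙ(Cyl) * p
  have hgood : ℙ (Cyl ξ a) * ENNReal.ofReal p ≤ ℙ (Cyl ξ a ∩ Good S a.length c) := by
    rw [meas_good hmeas hindep hdist hS a (by omega : (0:ℤ) < c)]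
    refine mul_le_mul_right ?_ _
    rw [← meas_tau hmeas hindep hdist hS hτ hc1]
    exact hlad
  -- additivity
  have hadd : ℙ (Cyl ξ a ∩ Bad S a.length c) + ℙ (Cyl ξ a ∩ Good S a.length c) ≤
      ℙ (Cyl ξ a) := by
    rw [← measure_union
      (Set.disjoint_of_subset Set.inter_subset_right Set.inter_subset_right
        (bad_disjoint_good S a.length (by omega)))
      ((measurableSet_cyl hmeas a).inter (measurableSet_good hmeas hS a.length c))]
    exact measure_mono (by intro ω hω; rcases hω with h | h <;> exact h.1)
  have hsplit : ℙ (Cyl ξ a) =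
      ℙ (Cyl ξ a) * ENNReal.ofReal (1 - p) + ℙ (Cyl ξ a) * ENNReal.ofReal p := by
    rw [← mul_add, ← ENNReal.ofReal_add (by linarith) (le_of_lt hp0)]
    norm_num
  have h1 : ℙ (Cyl ξ a ∩ Bad S a.length c) + ℙ (Cyl ξ a) * ENNReal.ofReal p ≤
      ℙ (Cyl ξ a) * ENNReal.ofReal (1 - p) + ℙ (Cyl ξ a) * ENNReal.ofReal p := by
    calc ℙ (Cyl ξ a ∩ Bad S a.length c) + ℙ (Cyl ξ a) * ENNReal.ofReal p
        ≤ ℙ (Cyl ξ a ∩ Bad S a.length c) + ℙ (Cyl ξ a ∩ Good S a.length c) :=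
          add_le_add_right hgood _
      _ ≤ ℙ (Cyl ξ a) := hadd
      _ = _ := hsplit
  exact (ENNReal.add_le_add_iff_right
    (ENNReal.mul_ne_top (measure_ne_top _ _) ENNReal.ofReal_ne_top)).1 h1

lemma delta_eq {S : ℕ → Ω → ℤ} {Δ : ℕ → Ω → ℕ}
    (hΔ : ∀ n ω, Δ n ω =
      Set.ncard {l : ℕ | 1 ≤ l ∧ l ≤ n ∧ ∀ m : ℕ, m ≤ l → S m ω ≤ S l ω})
    (t : ℕ) (ω : Ω) : Δ t ω = (Fcnt S ω t).card := by
  rw [hΔ]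
  have : {l : ℕ | 1 ≤ l ∧ l ≤ t ∧ ∀ m : ℕ, m ≤ l → S m ω ≤ S l ω} = ↑(Fcnt S ω t) := by
    ext l
    rw [Set.mem_setOf_eq, Finset.mem_coe, Fcnt, Finset.mem_filter, Finset.mem_Icc]
    simp [RecAt, and_assoc]
  rw [this, Set.ncard_coe_finset]

lemma Fcnt_zero (S : ℕ → Ω → ℤ) (ω : Ω) : Fcnt S ω 0 = ∅ := by
  simp [Fcnt]

lemma Fcnt_succ (S : ℕ → Ω → ℤ) (ω : Ω) (t : ℕ) :
    Fcnt S ω (t + 1) =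
      if RecAt S ω (t + 1) then insert (t + 1) (Fcnt S ω t) else Fcnt S ω t := by
  rw [Fcnt, ← Finset.insert_Icc_right_eq_Icc_add_one (by omega : 1 ≤ t + 1), Finset.filter_insert]
  rfl

lemma Fcnt_mono (S : ℕ → Ω → ℤ) (ω : Ω) {t t' : ℕ} (h : t ≤ t') :
    Fcnt S ω t ⊆ Fcnt S ω t' := by
  apply Finset.filter_subset_filter
  exact Finset.Icc_subset_Icc le_rfl h

lemma mem_Fcnt {S : ℕ → Ω → ℤ} {ω : Ω} {t ℓ : ℕ} :
    ℓ ∈ Fcnt S ω t ↔ 1 ≤ ℓ ∧ ℓ ≤ t ∧ RecAt S ω ℓ := by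
  simp [Fcnt, Finset.mem_Icc, and_assoc]

lemma cnt_succ_le (S : ℕ → Ω → ℤ) (ω : Ω) (t : ℕ) :
    (Fcnt S ω (t + 1)).card ≤ (Fcnt S ω t).card + 1 := by
  rw [Fcnt_succ]
  split_ifs
  · exact (Finset.card_insert_le _ _)
  · omega

lemma rec_of_cnt_ne (S : ℕ → Ω → ℤ) (ω : Ω) (t : ℕ)
    (h : (Fcnt S ω (t + 1)).card ≠ (Fcnt S ω t).card) : RecAt S ω (t + 1) := by
  by_contra hn
  rw [Fcnt_succ, if_neg hn] at h
  exact h rfl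

lemma exists_record {S : ℕ → Ω → ℤ} {ω : Ω} {n r : ℕ} (hn : 1 ≤ n)
    (h : n ≤ (Fcnt S ω r).card) :
    ∃ t, 1 ≤ t ∧ t ≤ r ∧ RecAt S ω t ∧ (Fcnt S ω t).card = n := by
  set T := {t : ℕ | n ≤ (Fcnt S ω t).card} with hT
  have hrT : r ∈ T := h
  set t := sInf T with ht
  have htT : t ∈ T := Nat.sInf_mem ⟨r, hrT⟩
  have htr : t ≤ r := Nat.sInf_le hrT
  have ht1 : 1 ≤ t := by
    rcases Nat.eq_zero_or_pos t with h0 | h0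
    · exfalso
      have : (Fcnt S ω 0).card = 0 := by rw [Fcnt_zero]; rfl
      have := htT
      rw [h0] at this
      simp only [hT, Set.mem_setOf_eq] at this
      omega
    · exact h0
  have hprev : t - 1 ∉ T := Nat.notMem_of_lt_sInf (by omega)
  simp only [hT, Set.mem_setOf_eq, not_le] at hprev
  have htsucc : t = (t - 1) + 1 := by omega
  have hle : (Fcnt S ω t).card ≤ (Fcnt S ω (t - 1)).card + 1 := by
    rw [htsucc]; exact cnt_succ_le S ω (t - 1)
  have hcard : (Fcnt S ω t).card = n := by
    have := htT; simp only [hT, Set.mem_setOf_eq] at this; omega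
  have hrec : RecAt S ω t := by
    rw [htsucc]
    apply rec_of_cnt_ne
    rw [← htsucc, hcard]
    omega
  exact ⟨t, ht1, htr, hrec, hcard⟩

lemma recAt_iff_lRecAt {ξ : ℕ → Ω → ℤ} {S : ℕ → Ω → ℤ}
    (hS : ∀ n ω, S n ω = ∑ i ∈ Finset.range n, ξ i ω)
    {ω : Ω} {a : List ℤ} (hω : ω ∈ Cyl ξ a) {ℓ : ℕ} (hℓ : ℓ ≤ a.length) :
    RecAt S ω ℓ ↔ LRecAt a ℓ := by
  constructor
  · intro h j hj
    have := h j hj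
    rwa [S_eq_of_cyl hS hω (by omega), S_eq_of_cyl hS hω hℓ] at this
  · intro h j hj
    have := h j hj
    rwa [← S_eq_of_cyl hS hω (by omega : j ≤ a.length), ← S_eq_of_cyl hS hω hℓ] at this

lemma fcnt_eq_lcnt {ξ : ℕ → Ω → ℤ} {S : ℕ → Ω → ℤ}
    (hS : ∀ n ω, S n ω = ∑ i ∈ Finset.range n, ξ i ω)
    {ω : Ω} {a : List ℤ} (hω : ω ∈ Cyl ξ a) :
    (Fcnt S ω a.length).card = Lcnt a := by
  unfold Fcnt Lcnt
  congr 1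
  apply Finset.filter_congr
  intro ℓ hℓ
  rw [Finset.mem_Icc] at hℓ
  exact recAt_iff_lRecAt hS hω hℓ.2


/-! ### Inclusion lemmas -/

lemma A_succ_subset {ξ : ℕ → Ω → ℤ} {S : ℕ → Ω → ℤ}
    (hS : ∀ n ω, S n ω = ∑ i ∈ Finset.range n, ξ i ω)
    {Δ : ℕ → Ω → ℕ}
    (hΔ : ∀ n ω, Δ n ω =
      Set.ncard {l : ℕ | 1 ≤ l ∧ l ≤ n ∧ ∀ m : ℕ, m ≤ l → S m ω ≤ S l ω})
    {m n : ℕ} (hn : 1 ≤ n) :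
    Arec S Δ m (n + 1) ⊆
      ⋃ a ∈ D m n, (Cyl ξ a ∩ Bad S a.length ((m : ℤ) - psum a a.length)) := by
  rintro ω ⟨t', ht'1, hrec', hΔ', hSt'⟩
  have hcnt' : (Fcnt S ω t').card = n + 1 := by rw [← delta_eq hΔ]; exact hΔ'
  have ht'eq : t' = (t' - 1) + 1 := by omega
  have hprev : n ≤ (Fcnt S ω (t' - 1)).card := by
    have := cnt_succ_le S ω (t' - 1)
    rw [← ht'eq] at this
    omega
  obtain ⟨t, ht1, htr, hrect, hcnt⟩ := exists_record hn hprev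
  have htt' : t < t' := by omega
  have hSt : S t ω < (m : ℤ) := lt_of_le_of_lt (hrec' t (by omega)) hSt'
  set a := pre ξ ω 0 t with ha
  have hωa : ω ∈ Cyl ξ a := mem_cyl_pre ξ ω t
  have hlen : a.length = t := by simp [ha]
  have hps : psum a a.length = S t ω := by
    rw [← S_eq_of_cyl hS hωa le_rfl, hlen]
  have hmemD : a ∈ D m n := by
    refine ⟨by omega, ?_, ?_, ?_⟩
    · exact (recAt_iff_lRecAt hS hωa le_rfl).mp (by rw [hlen]; exact hrect)
    · rw [← fcnt_eq_lcnt hS hωa, hlen]; exact hcnt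
    · rw [hps]; exact hSt
  refine Set.mem_biUnion hmemD ⟨hωa, ?_⟩
  show ω ∈ Bad S a.length ((m : ℤ) - psum a a.length)
  rw [hps, hlen]
  set T := {j : ℕ | 1 ≤ j ∧ S t ω ≤ S (t + j) ω} with hT
  have hne : (t' - t) ∈ T := by
    refine ⟨by omega, ?_⟩
    have he : t + (t' - t) = t' := by omega
    rw [he]
    exact hrec' t (by omega)
  set k := sInf T with hk
  have hkT : k ∈ T := Nat.sInf_mem ⟨_, hne⟩
  have hkle : k ≤ t' - t := Nat.sInf_le hne
  refine ⟨k, hkT.1, fun j hj1 hj2 => ?_, hkT.2, ?_⟩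
  · have hjT : j ∉ T := Nat.notMem_of_lt_sInf hj2
    simp only [hT, Set.mem_setOf_eq, not_and, not_le] at hjT
    exact hjT hj1
  · have h1 : t + k ≤ t' := by omega
    have := hrec' (t + k) h1
    omega

lemma biUnion_D_subset {ξ : ℕ → Ω → ℤ} {S : ℕ → Ω → ℤ}
    (hS : ∀ n ω, S n ω = ∑ i ∈ Finset.range n, ξ i ω)
    {Δ : ℕ → Ω → ℕ}
    (hΔ : ∀ n ω, Δ n ω =
      Set.ncard {l : ℕ | 1 ≤ l ∧ l ≤ n ∧ ∀ m : ℕ, m ≤ l → S m ω ≤ S l ω})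
    {m n : ℕ} :
    (⋃ a ∈ D m n, Cyl ξ a) ⊆ Arec S Δ m n := by
  intro ω hω
  rw [Set.mem_iUnion₂] at hω
  obtain ⟨a, haD, hωa⟩ := hω
  exact ⟨a.length, haD.1, (recAt_iff_lRecAt hS hωa le_rfl).mpr haD.2.1,
    by rw [delta_eq hΔ, fcnt_eq_lcnt hS hωa]; exact haD.2.2.1,
    by rw [S_eq_of_cyl hS hωa le_rfl]; exact haD.2.2.2⟩

lemma D_pairwiseDisjoint {ξ : ℕ → Ω → ℤ} {S : ℕ → Ω → ℤ}
    (hS : ∀ n ω, S n ω = ∑ i ∈ Finset.range n, ξ i ω) {m n : ℕ} :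
    (D m n).PairwiseDisjoint (fun a => Cyl ξ a) := by
  intro a ha a' ha' hne
  rw [Function.onFun, Set.disjoint_left]
  intro ω hωa hωa'
  apply hne
  have key : ∀ u v : List ℤ, u ∈ D m n → v ∈ D m n → u.length ≤ v.length →
      ω ∈ Cyl ξ u → ω ∈ Cyl ξ v → u = v := by
    intro u v hu hv hlen hωu hωv
    have hleq : u.length = v.length := by
      by_contra hne'
      have hlt : u.length < v.length := lt_of_le_of_ne hlen hne'
      have h1 : (Fcnt S ω u.length).card = n := by
        rw [fcnt_eq_lcnt hS hωu]; exact hu.2.2.1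
      have h2 : (Fcnt S ω v.length).card = n := by
        rw [fcnt_eq_lcnt hS hωv]; exact hv.2.2.1
      have hvmem : v.length ∈ Fcnt S ω v.length :=
        mem_Fcnt.mpr ⟨hv.1, le_rfl, (recAt_iff_lRecAt hS hωv le_rfl).mpr hv.2.1⟩
      have hnotmem : v.length ∉ Fcnt S ω u.length := by
        intro hc
        have := mem_Fcnt.mp hc
        omega
      have hsub : insert v.length (Fcnt S ω u.length) ⊆ Fcnt S ω v.length := by
        intro x hx
        rcases Finset.mem_insert.mp hx with h | h
        · rw [h]; exact hvmem
        · exact Fcnt_mono S ω (le_of_lt hlt) h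
      have hcard := Finset.card_le_card hsub
      rw [Finset.card_insert_of_notMem hnotmem, h1, h2] at hcard
      omega
    apply List.ext_getElem hleq
    intro i hi1 hi2
    have e1 : ξ i ω = u.getD i 0 := hωu i hi1
    have e2 : ξ i ω = v.getD i 0 := hωv i hi2
    rw [← List.getD_eq_getElem u 0 hi1, ← List.getD_eq_getElem v 0 hi2, ← e1, ← e2]
  rcases le_total a.length a'.length with h | h
  · exact key a a' ha ha' h hωa hωa'
  · exact (key a' a ha' ha h hωa' hωa).symm

lemma A_one_subset {ξ : ℕ → Ω → ℤ} {S : ℕ → Ω → ℤ}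
    (hS : ∀ n ω, S n ω = ∑ i ∈ Finset.range n, ξ i ω)
    {Δ : ℕ → Ω → ℕ} {m : ℕ} :
    Arec S Δ m 1 ⊆ Bad S 0 (m : ℤ) := by
  rintro ω ⟨t', ht'1, hrec', hΔ', hSt'⟩
  have h0 := S_zero hS ω
  set T := {j : ℕ | 1 ≤ j ∧ S 0 ω ≤ S j ω} with hT
  have hne : t' ∈ T := ⟨ht'1, hrec' 0 (by omega)⟩
  set k := sInf T with hk
  have hkT : k ∈ T := Nat.sInf_mem ⟨_, hne⟩
  have hkle : k ≤ t' := Nat.sInf_le hne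
  refine ⟨k, hkT.1, fun j hj1 hj2 => ?_, ?_, ?_⟩
  · have hjT : j ∉ T := Nat.notMem_of_lt_sInf hj2
    simp only [hT, Set.mem_setOf_eq, not_and, not_le] at hjT
    have := hjT hj1
    simpa using this
  · simpa using hkT.2
  · have := hrec' k hkle
    simp only [Nat.zero_add]
    omega


/-! ### The geometric decay of `Arec` -/

lemma psum_nonneg_of_D {m n : ℕ} {a : List ℤ} (ha : a ∈ D m n) :
    0 ≤ psum a a.length := by
  have := ha.2.1 0 (Nat.zero_le _)
  simpa [psum] using this

lemma step_bound {ξ : ℕ → Ω → ℤ} (hmeas : ∀ i, Measurable (ξ i))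
    (hindep : iIndepFun ξ (ℙ : Measure Ω))
    [IsProbabilityMeasure (ℙ : Measure Ω)]
    {ν : Measure ℤ} (hdist : ∀ i, Measure.map (ξ i) ℙ = ν)
    {S : ℕ → Ω → ℤ} (hS : ∀ n ω, S n ω = ∑ i ∈ Finset.range n, ξ i ω)
    {Δ : ℕ → Ω → ℕ}
    (hΔ : ∀ n ω, Δ n ω =
      Set.ncard {l : ℕ | 1 ≤ l ∧ l ≤ n ∧ ∀ m : ℕ, m ≤ l → S m ω ≤ S l ω})
    {τ : Ω → ℕ} (hτ : ∀ ω, τ ω = sInf {k : ℕ | 1 ≤ k ∧ 0 ≤ S k ω})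
    {α K₁ : ℝ} (hα₁ : 1 < α) (hK₁ : 0 < K₁) (hK₁' : K₁ ≤ 1)
    {m : ℕ} (hm : 1 ≤ m)
    (hladder : ∀ m' : ℕ, 1 ≤ m' →
      ENNReal.ofReal (K₁ * (m' : ℝ) ^ ((1 : ℝ) - α)) ≤ ℙ {ω | (m' : ℤ) ≤ S (τ ω) ω})
    {n : ℕ} (hn : 1 ≤ n) :
    ℙ (Arec S Δ m (n + 1)) ≤
      ENNReal.ofReal (1 - K₁ * (m : ℝ) ^ ((1 : ℝ) - α)) * ℙ (Arec S Δ m n) := by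
  set q : ℝ≥0∞ := ENNReal.ofReal (1 - K₁ * (m : ℝ) ^ ((1 : ℝ) - α)) with hq
  calc ℙ (Arec S Δ m (n + 1))
      ≤ ℙ (⋃ a ∈ D m n, (Cyl ξ a ∩ Bad S a.length ((m : ℤ) - psum a a.length))) :=
        measure_mono (A_succ_subset hS hΔ hn)
    _ ≤ ∑' a : ↥(D m n),
          ℙ (Cyl ξ (a : List ℤ) ∩ Bad S (a : List ℤ).length ((m : ℤ) - psum a (a : List ℤ).length)) :=
        measure_biUnion_le ℙ (Set.to_countable _) _
    _ ≤ ∑' a : ↥(D m n), ℙ (Cyl ξ (a : List ℤ)) * q := by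
        apply ENNReal.tsum_le_tsum
        intro a
        have ha := a.2
        have h1 : (1 : ℤ) ≤ (m : ℤ) - psum a (a : List ℤ).length := by
          have := ha.2.2.2; omega
        have h2 : (m : ℤ) - psum a (a : List ℤ).length ≤ (m : ℤ) := by
          have := psum_nonneg_of_D ha; omega
        exact bad_bound hmeas hindep hdist hS hτ hα₁ hK₁ hK₁' hm hladder _ h1 h2
    _ = q * ∑' a : ↥(D m n), ℙ (Cyl ξ (a : List ℤ)) := by
        rw [ENNReal.tsum_mul_right, mul_comm]
    _ = q * ℙ (⋃ a ∈ D m n, Cyl ξ a) := by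
        rw [measure_biUnion (Set.to_countable _) (D_pairwiseDisjoint hS)
          (fun a _ => measurableSet_cyl hmeas a)]
    _ ≤ q * ℙ (Arec S Δ m n) :=
        mul_le_mul_right (measure_mono (biUnion_D_subset hS hΔ)) _

lemma geom_bound {ξ : ℕ → Ω → ℤ} (hmeas : ∀ i, Measurable (ξ i))
    (hindep : iIndepFun ξ (ℙ : Measure Ω))
    [IsProbabilityMeasure (ℙ : Measure Ω)]
    {ν : Measure ℤ} (hdist : ∀ i, Measure.map (ξ i) ℙ = ν)
    {S : ℕ → Ω → ℤ} (hS : ∀ n ω, S n ω = ∑ i ∈ Finset.range n, ξ i ω)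
    {Δ : ℕ → Ω → ℕ}
    (hΔ : ∀ n ω, Δ n ω =
      Set.ncard {l : ℕ | 1 ≤ l ∧ l ≤ n ∧ ∀ m : ℕ, m ≤ l → S m ω ≤ S l ω})
    {τ : Ω → ℕ} (hτ : ∀ ω, τ ω = sInf {k : ℕ | 1 ≤ k ∧ 0 ≤ S k ω})
    {α K₁ : ℝ} (hα₁ : 1 < α) (hK₁ : 0 < K₁) (hK₁' : K₁ ≤ 1)
    {m : ℕ} (hm : 1 ≤ m)
    (hladder : ∀ m' : ℕ, 1 ≤ m' →
      ENNReal.ofReal (K₁ * (m' : ℝ) ^ ((1 : ℝ) - α)) ≤ ℙ {ω | (m' : ℤ) ≤ S (τ ω) ω}) :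
    ∀ n : ℕ, 1 ≤ n → ℙ (Arec S Δ m n) ≤
      ENNReal.ofReal (1 - K₁ * (m : ℝ) ^ ((1 : ℝ) - α)) ^ n := by
  set q : ℝ≥0∞ := ENNReal.ofReal (1 - K₁ * (m : ℝ) ^ ((1 : ℝ) - α)) with hq
  have base : ℙ (Arec S Δ m 1) ≤ q := by
    have hsub : Arec S Δ m 1 ⊆ Cyl ξ ([] : List ℤ) ∩ Bad S ([] : List ℤ).length ((m : ℤ) - psum [] 0) := by
      intro ω hω
      refine ⟨by intro i hi; simp at hi, ?_⟩
      have : ((m : ℤ) - psum [] 0) = (m : ℤ) := by simp [psum]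
      rw [this]
      exact A_one_subset hS hω
    calc ℙ (Arec S Δ m 1)
        ≤ ℙ (Cyl ξ ([] : List ℤ) ∩ Bad S ([] : List ℤ).length ((m : ℤ) - psum [] 0)) :=
          measure_mono hsub
      _ ≤ ℙ (Cyl ξ ([] : List ℤ)) * q := by
          refine bad_bound hmeas hindep hdist hS hτ hα₁ hK₁ hK₁' hm hladder _ ?_ ?_ <;>
            simp [psum] <;> omega
      _ ≤ 1 * q := mul_le_mul_left prob_le_one _
      _ = q := one_mul q
  intro n hn
  induction n with
  | zero => omega
  | succ k ih =>
    rcases Nat.eq_zero_or_pos k with hk | hk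
    · subst hk
      simpa using base
    · calc ℙ (Arec S Δ m (k + 1))
          ≤ q * ℙ (Arec S Δ m k) :=
            step_bound hmeas hindep hdist hS hΔ hτ hα₁ hK₁ hK₁' hm hladder hk
        _ ≤ q * q ^ k := mul_le_mul_right (ih hk) _
        _ = q ^ (k + 1) := by rw [pow_succ, mul_comm]

end Stmt19Aux



/-- Assume `ℙ(S_{τ₁} ≥ m) ≥ K₁ · m^{1-α}` for all `m ≥ 1`, where
`τ₁ = inf{k ≥ 1 : S_k ≥ 0}` and `K₁ ∈ (0,1]`. Then for every `m ≥ 1` and every real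
`y ≥ 1`, `ℙ(Δ(ρ_m) > y · m^{α-1}) ≤ exp(-K₁ y / 2)`, where `ρ_m = inf{k ≥ 0 : S_k ≥ m}`
and `Δ(k)` counts the weak records of the walk up to time `k`. -/
theorem stmt_19
    (α : ℝ) (hα₁ : 1 < α) (hα₂ : α < 2)
    (Ω : Type) [MeasureSpace Ω] [IsProbabilityMeasure (ℙ : Measure Ω)]
    (ν : Measure ℤ) [IsProbabilityMeasure ν]
    (hsupp : ν {k : ℤ | k < -1} = 0)
    (hint : Integrable (fun x : ℤ => (x : ℝ)) ν)
    (hmean : ∫ x : ℤ, (x : ℝ) ∂ν = 0)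
    (C : ℝ) (hC : 0 < C)
    (htail : Tendsto (fun k : ℕ => (k : ℝ) ^ α * (ν {j : ℤ | (k : ℤ) ≤ j}).toReal)
      atTop (nhds C))
    (ξ : ℕ → Ω → ℤ) (hmeas : ∀ i, Measurable (ξ i))
    (hindep : iIndepFun ξ ℙ)
    (hdist : ∀ i, Measure.map (ξ i) ℙ = ν)
    (S : ℕ → Ω → ℤ) (hS : ∀ n ω, S n ω = ∑ i ∈ Finset.range n, ξ i ω)
    (Δ : ℕ → Ω → ℕ)
    (hΔ : ∀ n ω, Δ n ω =
      Set.ncard {l : ℕ | 1 ≤ l ∧ l ≤ n ∧ ∀ m : ℕ, m ≤ l → S m ω ≤ S l ω})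
    (τ : Ω → ℕ) (hτ : ∀ ω, τ ω = sInf {k : ℕ | 1 ≤ k ∧ 0 ≤ S k ω})
    (ρ : ℕ → Ω → ℕ) (hρ : ∀ m ω, ρ m ω = sInf {k : ℕ | (m : ℤ) ≤ S k ω})
    (K₁ : ℝ) (hK₁ : 0 < K₁) (hK₁' : K₁ ≤ 1)
    (hladder : ∀ m : ℕ, 1 ≤ m →
      ENNReal.ofReal (K₁ * (m : ℝ) ^ ((1 : ℝ) - α)) ≤ ℙ {ω | (m : ℤ) ≤ S (τ ω) ω}) :
    ∀ m : ℕ, 1 ≤ m → ∀ y : ℝ, 1 ≤ y →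
      ℙ {ω | y * (m : ℝ) ^ (α - 1) < (Δ (ρ m ω) ω : ℝ)} ≤
        ENNReal.ofReal (Real.exp (-K₁ * y / 2)) := by
  intro m hm y hy
  have hmR : (1 : ℝ) ≤ (m : ℝ) := by exact_mod_cast hm
  have hmpos : (0 : ℝ) < (m : ℝ) := by linarith
  set p : ℝ := K₁ * (m : ℝ) ^ ((1 : ℝ) - α) with hp
  have hp0 : 0 < p := mul_pos hK₁ (Real.rpow_pos_of_pos hmpos _)
  have hp1 : p ≤ 1 := by
    have h1 : (m : ℝ) ^ ((1 : ℝ) - α) ≤ 1 :=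
      Real.rpow_le_one_of_one_le_of_nonpos hmR (by linarith)
    nlinarith
  have hxm : (1 : ℝ) ≤ (m : ℝ) ^ (α - 1) := by
    have := Real.rpow_le_rpow_of_exponent_le hmR (by linarith : (0 : ℝ) ≤ α - 1)
    rwa [Real.rpow_zero] at this
  set x : ℝ := y * (m : ℝ) ^ (α - 1) with hx
  have hx1 : 1 ≤ x := by nlinarith
  set n : ℕ := ⌊x⌋₊ with hn
  have hn1 : 1 ≤ n := Nat.le_floor (by exact_mod_cast hx1)
  -- inclusion of the target event into `Arec`
  have hincl : {ω | x < (Δ (ρ m ω) ω : ℝ)} ⊆ Stmt19Aux.Arec S Δ m n := by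
    intro ω hω
    simp only [Set.mem_setOf_eq] at hω
    have hΔρ : n + 1 ≤ Δ (ρ m ω) ω := by
      have h1 : (n : ℝ) ≤ x := Nat.floor_le (by linarith)
      have h2 : (n : ℝ) < (Δ (ρ m ω) ω : ℝ) := lt_of_le_of_lt h1 hω
      exact_mod_cast h2
    have hRne : {k : ℕ | (m : ℤ) ≤ S k ω}.Nonempty := by
      by_contra h
      have h0 : ρ m ω = 0 := by
        rw [hρ, Set.not_nonempty_iff_eq_empty.1 h, Nat.sInf_empty]
      rw [h0] at hΔρ
      have hz : Δ 0 ω = 0 := by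
        rw [Stmt19Aux.delta_eq hΔ, Stmt19Aux.Fcnt_zero]; rfl
      omega
    have hrinf : ρ m ω = sInf {k : ℕ | (m : ℤ) ≤ S k ω} := hρ m ω
    have hrR : (m : ℤ) ≤ S (ρ m ω) ω := by
      rw [hrinf]; exact Nat.sInf_mem hRne
    have hr1 : 1 ≤ ρ m ω := by
      rcases Nat.eq_zero_or_pos (ρ m ω) with h0 | h0
      · exfalso; rw [h0, Stmt19Aux.S_zero hS] at hrR; omega
      · exact h0
    have hlt : ∀ j < ρ m ω, S j ω < (m : ℤ) := by
      intro j hj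
      rw [hrinf] at hj
      have hnot : j ∉ {k : ℕ | (m : ℤ) ≤ S k ω} := Nat.notMem_of_lt_sInf hj
      simp only [Set.mem_setOf_eq, not_le] at hnot
      exact hnot
    have hcntr : n + 1 ≤ (Stmt19Aux.Fcnt S ω (ρ m ω)).card := by
      rw [← Stmt19Aux.delta_eq hΔ]; exact hΔρ
    have hreq : ρ m ω = (ρ m ω - 1) + 1 := by omega
    have hprev : n ≤ (Stmt19Aux.Fcnt S ω (ρ m ω - 1)).card := by
      have := Stmt19Aux.cnt_succ_le S ω (ρ m ω - 1)
      rw [← hreq] at this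
      omega
    obtain ⟨t, ht1, htr, hrect, hcnt⟩ := Stmt19Aux.exists_record hn1 hprev
    exact ⟨t, ht1, hrect, by rw [Stmt19Aux.delta_eq hΔ]; exact hcnt, hlt t (by omega)⟩
  have hgeom := Stmt19Aux.geom_bound hmeas hindep hdist hS hΔ hτ hα₁ hK₁ hK₁' hm hladder n hn1
  -- numeric estimate
  have hq : ENNReal.ofReal (1 - p) ^ n ≤ ENNReal.ofReal (Real.exp (-K₁ * y / 2)) := by
    rw [← ENNReal.ofReal_pow (by linarith)]
    apply ENNReal.ofReal_le_ofReal
    have h1 : (1 - p) ^ n ≤ Real.exp (-p) ^ n := by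
      apply pow_le_pow_left₀ (by linarith)
      have := Real.add_one_le_exp (-p)
      linarith
    have hn2 : x / 2 ≤ (n : ℝ) := by
      rcases le_or_gt 2 x with h | h
      · have hfl := Nat.lt_floor_add_one x
        rw [← hn] at hfl
        linarith
      · have h1n : (1 : ℝ) ≤ (n : ℝ) := by exact_mod_cast hn1
        linarith
    have hprod : p * (m : ℝ) ^ (α - 1) = K₁ := by
      rw [hp, mul_assoc, ← Real.rpow_add hmpos]
      have he : (1 : ℝ) - α + (α - 1) = 0 := by ring
      rw [he, Real.rpow_zero, mul_one]
    have hpx : p * x = K₁ * y := by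
      calc p * x = y * (p * (m : ℝ) ^ (α - 1)) := by rw [hx]; ring
        _ = K₁ * y := by rw [hprod]; ring
    have h3 : K₁ * y / 2 ≤ (n : ℝ) * p := by nlinarith
    have h4 : Real.exp (-p) ^ n ≤ Real.exp (-K₁ * y / 2) := by
      rw [← Real.exp_nat_mul]
      apply Real.exp_le_exp.mpr
      nlinarith
    exact le_trans h1 h4
  calc ℙ {ω | y * (m : ℝ) ^ (α - 1) < (Δ (ρ m ω) ω : ℝ)}
      ≤ ℙ (Stmt19Aux.Arec S Δ m n) := measure_mono hincl
    _ ≤ ENNReal.ofReal (1 - K₁ * (m : ℝ) ^ ((1 : ℝ) - α)) ^ n := hgeom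
    _ ≤ ENNReal.ofReal (Real.exp (-K₁ * y / 2)) := by rw [← hp]; exact hq
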